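/- arXiv:1507.08964 — 2 statements merged into one kernel-verified Lean document; each statement's English description precedes it below -/
import Mathlib

section
/- The squashed entanglement of a finite-dimensional bipartite state is bounded above by its entanglement of formation: E_sq(ω_AB) ≤ E_F(ω_AB), where E_sq(ω_AB) = (1/2) inf over all finite-dimensional extensions ω_ABE of I(A:B|E)_ω and E_F(ω_AB) = inf over pure-state ensemble decompositions ω_AB = Σ_i π_i ω^i_AB of Σ_i π_i H(ω^i_A). -/
open scoped BigOperators Kronecker ComplexOrder
open Matrix

noncomputable section

def binEnt (l : ℝ) : ℝ := Real.negMulLog l + Real.negMulLog (1 - l)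

def vN {n : Type*} [Fintype n] [DecidableEq n] (ρ : Matrix n n ℂ) : ℝ :=
  if h : ρ.IsHermitian then ∑ i, Real.negMulLog (h.eigenvalues i) else 0

def IsDensity {n : Type*} [Fintype n] [DecidableEq n] (ρ : Matrix n n ℂ) : Prop :=
  ρ.PosSemidef ∧ ρ.trace = 1

def IsPure {n : Type*} (ρ : Matrix n n ℂ) : Prop :=
  ∃ v : n → ℂ, ρ = Matrix.vecMulVec v (star v)

def ptrB {a b : Type*} [Fintype b] (ρ : Matrix (a × b) (a × b) ℂ) : Matrix a a ℂ :=
  Matrix.of fun i i' => ∑ j, ρ (i, j) (i', j)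

def ptrA {a b : Type*} [Fintype a] (ρ : Matrix (a × b) (a × b) ℂ) : Matrix b b ℂ :=
  Matrix.of fun j j' => ∑ i, ρ (i, j) (i, j')

def mutInfo {a b : Type*} [Fintype a] [Fintype b] [DecidableEq a] [DecidableEq b]
    (ρ : Matrix (a × b) (a × b) ℂ) : ℝ :=
  vN (ptrB ρ) + vN (ptrA ρ) - vN ρ

/- tripartite, index a × b × e -/
def tr3C {a b e : Type*} [Fintype e] (ρ : Matrix (a × b × e) (a × b × e) ℂ) :
    Matrix (a × b) (a × b) ℂ :=
  Matrix.of fun x y => ∑ k, ρ (x.1, x.2, k) (y.1, y.2, k)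

def tr3B {a b e : Type*} [Fintype b] (ρ : Matrix (a × b × e) (a × b × e) ℂ) :
    Matrix (a × e) (a × e) ℂ :=
  Matrix.of fun x y => ∑ j, ρ (x.1, j, x.2) (y.1, j, y.2)

def tr3A {a b e : Type*} [Fintype a] (ρ : Matrix (a × b × e) (a × b × e) ℂ) :
    Matrix (b × e) (b × e) ℂ :=
  Matrix.of fun x y => ∑ i, ρ (i, x.1, x.2) (i, y.1, y.2)

def m3A {a b e : Type*} [Fintype b] [Fintype e] (ρ : Matrix (a × b × e) (a × b × e) ℂ) :
    Matrix a a ℂ :=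
  Matrix.of fun i i' => ∑ j, ∑ k, ρ (i, j, k) (i', j, k)

def m3B {a b e : Type*} [Fintype a] [Fintype e] (ρ : Matrix (a × b × e) (a × b × e) ℂ) :
    Matrix b b ℂ :=
  Matrix.of fun j j' => ∑ i, ∑ k, ρ (i, j, k) (i, j', k)

def m3C {a b e : Type*} [Fintype a] [Fintype b] (ρ : Matrix (a × b × e) (a × b × e) ℂ) :
    Matrix e e ℂ :=
  Matrix.of fun k k' => ∑ i, ∑ j, ρ (i, j, k) (i, j, k')

/-- conditional mutual information I(A:B|E) for a state on a × b × e -/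
def cmi3 {a b e : Type*} [Fintype a] [Fintype b] [Fintype e]
    [DecidableEq a] [DecidableEq b] [DecidableEq e]
    (ρ : Matrix (a × b × e) (a × b × e) ℂ) : ℝ :=
  vN (tr3B ρ) + vN (tr3A ρ) - vN (m3C ρ) - vN ρ

/-- conditional mutual information I(A:B|E) for a state indexed by (a × b) × k -/
def cmiP {a b k : Type*} [Fintype a] [Fintype b] [Fintype k]
    [DecidableEq a] [DecidableEq b] [DecidableEq k]
    (ω : Matrix ((a × b) × k) ((a × b) × k) ℂ) : ℝ :=
  vN (Matrix.of fun (x y : a × k) => ∑ j, ω ((x.1, j), x.2) ((y.1, j), y.2)) +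
  vN (Matrix.of fun (x y : b × k) => ∑ i, ω ((i, x.1), x.2) ((i, y.1), y.2)) -
  vN (ptrA ω) - vN ω

namespace SqEF
set_option linter.unusedSectionVars false
open Polynomial

variable {n m : Type*} [Fintype n] [DecidableEq n] [Fintype m] [DecidableEq m]

lemma charpoly_conj (U A : Matrix n n ℂ) (hU : U ∈ Matrix.unitaryGroup n ℂ) :
    (U * A * star U).charpoly = A.charpoly := by
  have hUU : U * star U = 1 := Matrix.mem_unitaryGroup_iff.mp hU
  set f : Matrix n n ℂ →+* Matrix n n ℂ[X] := (Polynomial.C : ℂ →+* ℂ[X]).mapMatrix with hf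
  have hmul : f U * f (star U) = 1 := by
    rw [← _root_.map_mul f, hUU, _root_.map_one f]
  have key : Matrix.charmatrix (U * A * star U) = f U * Matrix.charmatrix A * f (star U) := by
    rw [Matrix.charmatrix, Matrix.charmatrix, Matrix.scalar_apply, ← Matrix.smul_one_eq_diagonal,
      mul_sub, sub_mul, mul_smul_comm, smul_mul_assoc, mul_one, hmul]
    rw [_root_.map_mul f, _root_.map_mul f]
  rw [Matrix.charpoly, Matrix.charpoly, key, det_mul, det_mul, mul_right_comm,
    ← det_mul, hmul, det_one, one_mul]

lemma charpoly_diag_real (d : n → ℝ) :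
    (Matrix.diagonal (fun i => (d i : ℂ))).charpoly
      = ((Finset.univ.val.map (fun i => ((d i : ℂ)))).map (fun a => X - C a)).prod := by
  rw [Matrix.charpoly, Matrix.charmatrix, Matrix.scalar_apply, RingHom.mapMatrix_apply]
  rw [Matrix.diagonal_map (by simp), Matrix.diagonal_sub, Matrix.det_diagonal]
  rw [Finset.prod_eq_multiset_prod, Multiset.map_map]
  rfl

lemma roots_charpoly_conj_diag (U : Matrix n n ℂ) (hU : U ∈ Matrix.unitaryGroup n ℂ) (d : n → ℝ) :
    (U * Matrix.diagonal (fun i => (d i : ℂ)) * star U).charpoly.roots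
      = Finset.univ.val.map (fun i => ((d i : ℂ))) := by
  rw [charpoly_conj _ _ hU, charpoly_diag_real, Polynomial.roots_multiset_prod_X_sub_C]

lemma isHermitian_diag_real (d : n → ℝ) :
    (Matrix.diagonal (fun i => (d i : ℂ))).IsHermitian := by
  rw [Matrix.IsHermitian, Matrix.diagonal_conjTranspose]
  funext i j
  by_cases h : i = j <;> simp [Matrix.diagonal_apply, h, Complex.conj_ofReal]

lemma isHermitian_conj_diag (U : Matrix n n ℂ) (d : n → ℝ) :
    (U * Matrix.diagonal (fun i => (d i : ℂ)) * star U).IsHermitian := by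
  rw [Matrix.star_eq_conjTranspose]
  exact Matrix.isHermitian_mul_mul_conjTranspose U (isHermitian_diag_real d)

/-- vN as a sum over charpoly roots -/
lemma vN_eq_roots (ρ : Matrix n n ℂ) (hρ : ρ.IsHermitian) :
    vN ρ = ((ρ.charpoly.roots).map (fun z => Real.negMulLog z.re)).sum := by
  rw [vN, dif_pos hρ]
  conv_rhs => rw [hρ.spectral_theorem, Unitary.conjStarAlgAut_apply]
  rw [show (RCLike.ofReal ∘ hρ.eigenvalues : n → ℂ) = fun i => ((hρ.eigenvalues i : ℝ) : ℂ) from rfl]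
  rw [roots_charpoly_conj_diag _ (hρ.eigenvectorUnitary).2]
  rw [Multiset.map_map, Finset.sum_eq_multiset_sum]
  congr 1

lemma vN_conj_diag (U : Matrix n n ℂ) (hU : U ∈ Matrix.unitaryGroup n ℂ) (d : n → ℝ) :
    vN (U * Matrix.diagonal (fun i => (d i : ℂ)) * star U) = ∑ i, Real.negMulLog (d i) := by
  rw [vN_eq_roots _ (isHermitian_conj_diag U d), roots_charpoly_conj_diag U hU d,
    Multiset.map_map, Finset.sum_eq_multiset_sum]
  congr 1

lemma vN_diagonal (d : n → ℝ) :
    vN (Matrix.diagonal (fun i => (d i : ℂ))) = ∑ i, Real.negMulLog (d i) := by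
  have h1 : (1 : Matrix n n ℂ) ∈ Matrix.unitaryGroup n ℂ := Submonoid.one_mem _
  have := vN_conj_diag 1 h1 d
  simpa using this

lemma charpoly_blockDiagonal (M : m → Matrix n n ℂ) :
    (Matrix.blockDiagonal M).charpoly = ∏ k, (M k).charpoly := by
  have key : Matrix.charmatrix (Matrix.blockDiagonal M)
      = Matrix.blockDiagonal (fun k => Matrix.charmatrix (M k)) := by
    funext x y
    rcases x with ⟨i, k⟩; rcases y with ⟨j, k'⟩
    by_cases h : k = k'
    · subst h
      by_cases hij : i = j
      · subst hij
        simp [Matrix.charmatrix_apply, Matrix.blockDiagonal_apply, Matrix.diagonal_apply]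
      · simp [Matrix.charmatrix_apply, Matrix.blockDiagonal_apply, Matrix.diagonal_apply,
          hij, Prod.ext_iff]
    · simp [Matrix.charmatrix_apply, Matrix.blockDiagonal_apply, Matrix.diagonal_apply,
        h, Prod.ext_iff]
  rw [Matrix.charpoly, key, Matrix.det_blockDiagonal]
  rfl

lemma isHermitian_blockDiagonal (M : m → Matrix n n ℂ) (h : ∀ k, (M k).IsHermitian) :
    (Matrix.blockDiagonal M).IsHermitian := by
  rw [Matrix.IsHermitian, Matrix.blockDiagonal_conjTranspose]
  exact congrArg Matrix.blockDiagonal (funext h)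

lemma vN_blockDiagonal (M : m → Matrix n n ℂ) (h : ∀ k, (M k).IsHermitian) :
    vN (Matrix.blockDiagonal M) = ∑ k, vN (M k) := by
  rw [vN_eq_roots _ (isHermitian_blockDiagonal M h), charpoly_blockDiagonal]
  have hne : (∏ k, (M k).charpoly) ≠ 0 := by
    apply Finset.prod_ne_zero_iff.mpr
    intro k _
    exact (Matrix.charpoly_monic (M k)).ne_zero
  rw [Polynomial.roots_prod _ _ hne, Multiset.map_bind, Multiset.sum_bind]
  rw [Finset.sum_congr rfl (fun k _ => vN_eq_roots (M k) (h k))]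
  rw [Finset.sum_eq_multiset_sum]

lemma trace_eq_sum_eigenvalues (ρ : Matrix n n ℂ) (hρ : ρ.IsHermitian) :
    ρ.trace = ((∑ i, hρ.eigenvalues i : ℝ) : ℂ) := by
  conv_lhs => rw [hρ.spectral_theorem, Unitary.conjStarAlgAut_apply]
  rw [Matrix.trace_mul_comm, ← mul_assoc, Matrix.mem_unitaryGroup_iff'.mp hρ.eigenvectorUnitary.2,
    one_mul, Matrix.trace_diagonal]
  push_cast
  rfl

lemma sum_eigenvalues_eq_one (ρ : Matrix n n ℂ) (hρ : ρ.IsHermitian) (htr : ρ.trace = 1) :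
    (∑ i, hρ.eigenvalues i) = 1 := by
  have := (trace_eq_sum_eigenvalues ρ hρ).symm.trans htr
  exact_mod_cast this

lemma vN_smul (ρ : Matrix n n ℂ) (hρ : ρ.IsHermitian) (htr : ρ.trace = 1) (c : ℝ) :
    vN ((c : ℂ) • ρ) = c * vN ρ + Real.negMulLog c := by
  have hrep : (c : ℂ) • ρ = (hρ.eigenvectorUnitary : Matrix n n ℂ) *
      Matrix.diagonal (fun i => ((c * hρ.eigenvalues i : ℝ) : ℂ)) *
      star (hρ.eigenvectorUnitary : Matrix n n ℂ) := by
    conv_lhs => rw [hρ.spectral_theorem, Unitary.conjStarAlgAut_apply]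
    have hd : (c : ℂ) • Matrix.diagonal (RCLike.ofReal ∘ hρ.eigenvalues)
        = Matrix.diagonal (fun i => ((c * hρ.eigenvalues i : ℝ) : ℂ)) := by
      funext i j
      by_cases h : i = j
      · subst h
        simp [Matrix.smul_apply, Matrix.diagonal_apply_eq, Function.comp]
      · simp [Matrix.smul_apply, Matrix.diagonal_apply_ne _ h]
    rw [← smul_mul_assoc, ← mul_smul_comm, hd]
  rw [hrep, vN_conj_diag _ hρ.eigenvectorUnitary.2]
  have : ∀ i, Real.negMulLog (c * hρ.eigenvalues i)
      = hρ.eigenvalues i * Real.negMulLog c + c * Real.negMulLog (hρ.eigenvalues i) :=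
    fun i => Real.negMulLog_mul c (hρ.eigenvalues i)
  rw [Finset.sum_congr rfl (fun i _ => this i), Finset.sum_add_distrib, ← Finset.sum_mul,
    ← Finset.mul_sum, sum_eigenvalues_eq_one ρ hρ htr, one_mul, vN, dif_pos hρ]
  ring

lemma charpoly_transpose (M : Matrix n n ℂ) : (Mᵀ).charpoly = M.charpoly := by
  have : Matrix.charmatrix (Mᵀ) = (Matrix.charmatrix M)ᵀ := by
    funext i j
    by_cases h : i = j
    · subst h; simp [Matrix.charmatrix_apply, Matrix.diagonal_apply]
    · simp [Matrix.charmatrix_apply, Matrix.diagonal_apply, h, Ne.symm h]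
  rw [Matrix.charpoly, Matrix.charpoly, this, Matrix.det_transpose]

lemma vN_transpose (ρ : Matrix n n ℂ) (hρ : ρ.IsHermitian) : vN (ρᵀ) = vN ρ := by
  rw [vN_eq_roots _ hρ.transpose, vN_eq_roots _ hρ, charpoly_transpose]

lemma eval_charpoly (x : ℂ) (M : Matrix n n ℂ) :
    (M.charpoly).eval x = (x • (1 : Matrix n n ℂ) - M).det := by
  rw [Matrix.charpoly, ← Polynomial.coe_evalRingHom, RingHom.map_det]
  congr 1
  funext i j
  by_cases h : i = j
  · subst h
    simp [Matrix.charmatrix_apply, Matrix.diagonal_apply, Matrix.one_apply]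
  · simp [Matrix.charmatrix_apply, Matrix.diagonal_apply, Matrix.one_apply, h]

lemma X_pow_charpoly_mul_comm (A : Matrix n m ℂ) (B : Matrix m n ℂ) :
    X ^ (Fintype.card m) * (A * B).charpoly = X ^ (Fintype.card n) * (B * A).charpoly := by
  have key : ∀ x : ℂ, x ≠ 0 →
      Polynomial.eval x (X ^ (Fintype.card m) * (A * B).charpoly)
        = Polynomial.eval x (X ^ (Fintype.card n) * (B * A).charpoly) := by
    intro x hx
    have h1 : x • (1 : Matrix n n ℂ) - A * B = x • ((1 : Matrix n n ℂ) - (x⁻¹ • A) * B) := by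
      rw [smul_sub, Matrix.smul_mul, smul_smul, mul_inv_cancel₀ hx, one_smul]
    have h2 : x • (1 : Matrix m m ℂ) - B * A = x • ((1 : Matrix m m ℂ) - B * (x⁻¹ • A)) := by
      rw [smul_sub, Matrix.mul_smul, smul_smul, mul_inv_cancel₀ hx, one_smul]
    simp only [Polynomial.eval_mul, Polynomial.eval_pow, Polynomial.eval_X, eval_charpoly]
    rw [h1, h2, Matrix.det_smul, Matrix.det_smul, Matrix.det_one_sub_mul_comm]
    ring
  have hinf : {x : ℂ | ((X ^ (Fintype.card m) * (A * B).charpoly)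
      - (X ^ (Fintype.card n) * (B * A).charpoly)).IsRoot x}.Infinite := by
    apply ((Set.finite_singleton (0 : ℂ)).infinite_compl).mono
    intro x hx
    have hx' : x ≠ 0 := by simpa using hx
    simp only [Set.mem_setOf_eq, Polynomial.IsRoot.def, Polynomial.eval_sub, sub_eq_zero]
    exact key x hx'
  have hz := Polynomial.eq_zero_of_infinite_isRoot _ hinf
  exact sub_eq_zero.mp hz

lemma vN_mul_comm (A : Matrix n m ℂ) (B : Matrix m n ℂ)
    (h1 : (A * B).IsHermitian) (h2 : (B * A).IsHermitian) : vN (A * B) = vN (B * A) := by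
  have hpoly := X_pow_charpoly_mul_comm A B
  have hr : (X ^ (Fintype.card m) * (A * B).charpoly).roots
      = (X ^ (Fintype.card n) * (B * A).charpoly).roots := by rw [hpoly]
  have hX : ∀ k : ℕ, ((X : ℂ[X]) ^ k).roots = Multiset.replicate k 0 := by
    intro k
    rw [Polynomial.roots_pow, Polynomial.roots_X, Multiset.nsmul_singleton]
  rw [Polynomial.roots_mul (mul_ne_zero (pow_ne_zero _ Polynomial.X_ne_zero)
      (Matrix.charpoly_monic _).ne_zero),
    Polynomial.roots_mul (mul_ne_zero (pow_ne_zero _ Polynomial.X_ne_zero)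
      (Matrix.charpoly_monic _).ne_zero), hX, hX] at hr
  have hsum := congrArg (fun s : Multiset ℂ => ((s.map (fun z => Real.negMulLog z.re)).sum)) hr
  simp only [Multiset.map_add, Multiset.sum_add, Multiset.map_replicate] at hsum
  simp only [Complex.zero_re, Real.negMulLog_zero, Multiset.sum_replicate, smul_zero,
    zero_add] at hsum
  rw [vN_eq_roots _ h1, vN_eq_roots _ h2, hsum]

lemma vN_proj (ρ : Matrix n n ℂ) (hρ : ρ.IsHermitian) (hidem : ρ * ρ = ρ) : vN ρ = 0 := by
  set U : Matrix n n ℂ := (hρ.eigenvectorUnitary : Matrix n n ℂ) with hUdef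
  have hUU : U * star U = 1 := Matrix.mem_unitaryGroup_iff.mp hρ.eigenvectorUnitary.2
  have hd : star U * ρ * U = Matrix.diagonal (RCLike.ofReal ∘ hρ.eigenvalues) :=
    by rw [← hρ.conjStarAlgAut_star_eigenvectorUnitary, Unitary.conjStarAlgAut_star_apply]
  have hDD : (Matrix.diagonal (RCLike.ofReal ∘ hρ.eigenvalues) : Matrix n n ℂ)
      * (Matrix.diagonal (RCLike.ofReal ∘ hρ.eigenvalues) : Matrix n n ℂ)
      = (Matrix.diagonal (RCLike.ofReal ∘ hρ.eigenvalues) : Matrix n n ℂ) := by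
    rw [← hd]
    calc (star U * ρ * U) * (star U * ρ * U)
        = star U * ρ * ((U * star U) * (ρ * U)) := by simp only [mul_assoc]
      _ = star U * (ρ * ρ) * U := by rw [hUU, one_mul]; simp only [mul_assoc]
      _ = star U * ρ * U := by rw [hidem]
  have heig : ∀ i, hρ.eigenvalues i = 0 ∨ hρ.eigenvalues i = 1 := by
    intro i
    have h0 := congrFun (congrFun hDD i) i
    simp only [Matrix.diagonal_mul_diagonal, Matrix.diagonal_apply_eq, Function.comp_apply] at h0
    have hre : hρ.eigenvalues i * hρ.eigenvalues i = hρ.eigenvalues i := by exact_mod_cast h0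
    by_cases hz : hρ.eigenvalues i = 0
    · exact Or.inl hz
    · exact Or.inr (mul_left_cancel₀ hz (hre.trans (mul_one _).symm))
  rw [vN, dif_pos hρ]
  apply Finset.sum_eq_zero
  intro i _
  rcases heig i with h | h <;> simp [h, Real.negMulLog_zero, Real.negMulLog_one]

lemma vN_nonneg (ρ : Matrix n n ℂ) (h : ρ.PosSemidef) (htr : ρ.trace = 1) : 0 ≤ vN ρ := by
  rw [vN, dif_pos h.1]
  apply Finset.sum_nonneg
  intro i _
  apply Real.negMulLog_nonneg (h.eigenvalues_nonneg i)
  have hsum := sum_eigenvalues_eq_one ρ h.1 htr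
  calc h.1.eigenvalues i ≤ ∑ j, h.1.eigenvalues j :=
        Finset.single_le_sum (fun j _ => h.eigenvalues_nonneg j) (Finset.mem_univ i)
    _ = 1 := hsum

lemma posSemidef_smul {ρ : Matrix n n ℂ} (h : ρ.PosSemidef) {c : ℝ} (hc : 0 ≤ c) :
    ((c : ℂ) • ρ).PosSemidef := by
  rw [Matrix.posSemidef_iff_dotProduct_mulVec]
  constructor
  · rw [Matrix.IsHermitian, Matrix.conjTranspose_smul, h.1.eq]
    congr 1
    simp [Complex.conj_ofReal]
  · intro x
    rw [Matrix.smul_mulVec, dotProduct_smul, smul_eq_mul]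
    exact mul_nonneg (by exact_mod_cast hc) (h.dotProduct_mulVec_nonneg x)

lemma posSemidef_blockDiagonal (M : m → Matrix n n ℂ) (h : ∀ k, (M k).PosSemidef) :
    (Matrix.blockDiagonal M).PosSemidef := by
  refine Matrix.PosSemidef.of_dotProduct_mulVec_nonneg (isHermitian_blockDiagonal M (fun k => (h k).1)) (fun x => ?_)
  have key : dotProduct (star x) (Matrix.blockDiagonal M *ᵥ x)
      = ∑ k, dotProduct (star fun i => x (i, k)) (M k *ᵥ fun i => x (i, k)) := by
    simp only [dotProduct, Matrix.mulVec, Fintype.sum_prod_type, Pi.star_apply,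
      Matrix.blockDiagonal_apply]
    rw [Finset.sum_comm]
    apply Finset.sum_congr rfl
    intro k _
    apply Finset.sum_congr rfl
    intro i _
    congr 1
    rw [Finset.sum_comm]
    simp [Finset.sum_ite_eq, ite_mul, zero_mul, mul_ite, mul_zero, eq_comm]
  rw [key]
  exact Finset.sum_nonneg fun k _ => (h k).dotProduct_mulVec_nonneg _

lemma isHermitian_ptrB {a b : Type*} [Fintype a] [Fintype b]
    {ρ : Matrix (a × b) (a × b) ℂ} (h : ρ.IsHermitian) : (ptrB ρ).IsHermitian := by
  funext i i'
  simp only [Matrix.conjTranspose_apply, ptrB, Matrix.of_apply, star_sum]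
  exact Finset.sum_congr rfl fun j _ => congrFun (congrFun h (i, j)) (i', j)

lemma isHermitian_ptrA {a b : Type*} [Fintype a] [Fintype b]
    {ρ : Matrix (a × b) (a × b) ℂ} (h : ρ.IsHermitian) : (ptrA ρ).IsHermitian := by
  funext j j'
  simp only [Matrix.conjTranspose_apply, ptrA, Matrix.of_apply, star_sum]
  exact Finset.sum_congr rfl fun i _ => congrFun (congrFun h (i, j)) (i, j')

lemma trace_ptrB {a b : Type*} [Fintype a] [Fintype b]
    (ρ : Matrix (a × b) (a × b) ℂ) : (ptrB ρ).trace = ρ.trace := by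
  simp [Matrix.trace, Matrix.diag, ptrB, Fintype.sum_prod_type]

lemma trace_ptrA {a b : Type*} [Fintype a] [Fintype b]
    (ρ : Matrix (a × b) (a × b) ℂ) : (ptrA ρ).trace = ρ.trace := by
  rw [Matrix.trace, Matrix.trace]
  simp only [Matrix.diag, ptrA, Matrix.of_apply, Fintype.sum_prod_type]
  exact Finset.sum_comm

lemma posSemidef_ptrB {a b : Type*} [Fintype a] [Fintype b] [DecidableEq a] [DecidableEq b]
    {ρ : Matrix (a × b) (a × b) ℂ} (h : ρ.PosSemidef) : (ptrB ρ).PosSemidef := by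
  have hE : ptrB ρ = ∑ j : b,
      (Matrix.of fun (i : a) (p : a × b) => if p = (i, j) then (1 : ℂ) else 0) * ρ *
        (Matrix.of fun (i : a) (p : a × b) => if p = (i, j) then (1 : ℂ) else 0)ᴴ := by
    funext i i'
    rw [Matrix.sum_apply]
    simp only [ptrB, Matrix.of_apply]
    apply Finset.sum_congr rfl
    intro j _
    have hq : ∀ q, ((Matrix.of fun (i : a) (p : a × b) => if p = (i, j) then (1 : ℂ) else 0) * ρ) i q
        = ρ (i, j) q := by
      intro q
      rw [Matrix.mul_apply]
      simp only [Matrix.of_apply, ite_mul, one_mul, zero_mul, Finset.sum_ite_eq',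
        Finset.mem_univ, if_true]
    rw [Matrix.mul_apply]
    simp only [Matrix.conjTranspose_apply, Matrix.of_apply, hq]
    simp only [apply_ite (star : ℂ → ℂ), star_one, star_zero, mul_ite, mul_one, mul_zero,
      Finset.sum_ite_eq', Finset.mem_univ, if_true]
  rw [hE]
  exact Finset.sum_induction _ Matrix.PosSemidef (fun A B hA hB => hA.add hB)
    Matrix.PosSemidef.zero (fun j _ => h.mul_mul_conjTranspose_same _)

lemma ptrB_vecMulVec {a b : Type*} [Fintype a] [Fintype b] (v : (a × b) → ℂ) :
    ptrB (Matrix.vecMulVec v (star v))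
      = (Matrix.of fun (i : a) (j : b) => v (i, j)) * (Matrix.of fun (i : a) (j : b) => v (i, j))ᴴ := by
  funext i i'
  simp [ptrB, Matrix.vecMulVec_apply, Matrix.mul_apply, Matrix.conjTranspose_apply]

lemma ptrA_vecMulVec {a b : Type*} [Fintype a] [Fintype b] (v : (a × b) → ℂ) :
    ptrA (Matrix.vecMulVec v (star v))
      = (Matrix.of fun (j : b) (i : a) => v (i, j)) * (Matrix.of fun (j : b) (i : a) => v (i, j))ᴴ := by
  funext j j'
  simp [ptrA, Matrix.vecMulVec_apply, Matrix.mul_apply, Matrix.conjTranspose_apply]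

lemma vN_pure_ptr_eq {a b : Type*} [Fintype a] [Fintype b] [DecidableEq a] [DecidableEq b]
    (v : (a × b) → ℂ) :
    vN (ptrA (Matrix.vecMulVec v (star v))) = vN (ptrB (Matrix.vecMulVec v (star v))) := by
  set M : Matrix a b ℂ := Matrix.of fun i j => v (i, j) with hM
  set N : Matrix b a ℂ := Matrix.of fun j i => v (i, j) with hN
  rw [ptrA_vecMulVec, ptrB_vecMulVec, ← hM, ← hN]
  rw [vN_mul_comm N Nᴴ (Matrix.isHermitian_mul_conjTranspose_self N)
    (Matrix.isHermitian_conjTranspose_mul_self N)]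
  have hNM : Nᴴ * N = (M * Mᴴ)ᵀ := by
    funext i i'
    rw [Matrix.mul_apply, Matrix.transpose_apply, Matrix.mul_apply]
    apply Finset.sum_congr rfl
    intro j _
    simp only [Matrix.conjTranspose_apply, Matrix.of_apply, hM, hN]
    exact mul_comm _ _
  rw [hNM, vN_transpose _ (Matrix.isHermitian_mul_conjTranspose_self M)]

lemma vN_pure_zero (ρ : Matrix n n ℂ) (hd : IsDensity ρ) (hp : IsPure ρ) : vN ρ = 0 := by
  obtain ⟨v, rfl⟩ := hp
  apply vN_proj _ hd.1.1
  have htr : (∑ k, v k * star (v k)) = 1 := by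
    simpa [Matrix.trace, Matrix.diag, Matrix.vecMulVec_apply] using hd.2
  funext i j
  rw [Matrix.mul_apply]
  simp only [Matrix.vecMulVec_apply, Pi.star_apply]
  calc ∑ k, v i * star (v k) * (v k * star (v j))
      = ∑ k, v k * star (v k) * (v i * star (v j)) := Finset.sum_congr rfl (fun k _ => by ring)
    _ = v i * star (v j) := by rw [← Finset.sum_mul, htr, one_mul]

lemma ensemble_exists {a b : Type*} [Fintype a] [Fintype b] [DecidableEq a] [DecidableEq b]
    (ω : Matrix (a × b) (a × b) ℂ) (hω : IsDensity ω) :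
    ∃ (m : ℕ) (π : Fin m → ℝ) (ωi : Fin m → Matrix (a × b) (a × b) ℂ),
        (∀ i, 0 ≤ π i) ∧ (∑ i, π i = 1) ∧ (∀ i, IsDensity (ωi i) ∧ IsPure (ωi i)) ∧
        ω = ∑ i, ((π i : ℂ)) • ωi i := by
  classical
  have h : ω.IsHermitian := hω.1.1
  set U : Matrix (a × b) (a × b) ℂ := (h.eigenvectorUnitary : Matrix (a × b) (a × b) ℂ) with hU
  set e := (Fintype.equivFin (a × b)).symm with he
  have hcol : ∀ p' : a × b, (∑ p, U p p' * star (U p p')) = 1 := by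
    intro p'
    have hcc := congrFun (congrFun (Matrix.mem_unitaryGroup_iff'.mp h.eigenvectorUnitary.2) p') p'
    rw [Matrix.mul_apply] at hcc
    simp only [Matrix.one_apply_eq] at hcc
    rw [← hcc]
    apply Finset.sum_congr rfl
    intro p _
    simp only [Matrix.star_eq_conjTranspose, Matrix.conjTranspose_apply]
    exact mul_comm _ _
  refine ⟨Fintype.card (a × b), fun i => h.eigenvalues (e i),
    fun i => Matrix.vecMulVec (fun p => U p (e i)) (star fun p => U p (e i)), ?_, ?_, ?_, ?_⟩
  · intro i
    exact hω.1.eigenvalues_nonneg _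
  · rw [Equiv.sum_comp e h.eigenvalues]
    exact sum_eigenvalues_eq_one ω h hω.2
  · intro i
    refine ⟨⟨?_, ?_⟩, ⟨_, rfl⟩⟩
    · show (Matrix.vecMulVec (fun p => U p (e i)) (star fun p => U p (e i))).PosSemidef
      rw [Matrix.vecMulVec_eq Unit]
      have hrow : Matrix.replicateRow Unit (star fun p => U p (e i))
          = (Matrix.replicateCol Unit (fun p => U p (e i)))ᴴ := by
        funext u p
        simp [Matrix.replicateRow_apply, Matrix.replicateCol_apply, Matrix.conjTranspose_apply]
      rw [hrow]
      exact Matrix.posSemidef_self_mul_conjTranspose _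
    · simp only [Matrix.trace, Matrix.diag, Matrix.vecMulVec_apply, Pi.star_apply]
      exact hcol (e i)
  · have hrhs : ∀ p q : a × b, (∑ i, ((h.eigenvalues (e i) : ℂ))
        • Matrix.vecMulVec (fun p => U p (e i)) (star fun p => U p (e i))) p q
        = ∑ p', ((h.eigenvalues p' : ℂ)) * (U p p' * star (U q p')) := by
      intro p q
      rw [Matrix.sum_apply]
      rw [← Equiv.sum_comp e (fun p' => ((h.eigenvalues p' : ℂ)) * (U p p' * star (U q p')))]
      apply Finset.sum_congr rfl
      intro i _
      simp [Matrix.smul_apply, Matrix.vecMulVec_apply, smul_eq_mul]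
    funext p q
    rw [hrhs]
    conv_lhs => rw [h.spectral_theorem, Unitary.conjStarAlgAut_apply]
    rw [Matrix.mul_apply]
    apply Finset.sum_congr rfl
    intro p' _
    rw [Matrix.mul_diagonal]
    simp only [Function.comp_apply, Matrix.star_eq_conjTranspose, Matrix.conjTranspose_apply]
    rw [mul_right_comm]
    exact mul_comm _ _

end SqEF

theorem stmt14 {a b : Type*} [Fintype a] [Fintype b] [DecidableEq a] [DecidableEq b]
    (ω : Matrix (a × b) (a × b) ℂ) (hω : IsDensity ω) :
    (1 / 2) * sInf {x : ℝ | ∃ (k : ℕ) (Ω : Matrix ((a × b) × Fin k) ((a × b) × Fin k) ℂ),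
        IsDensity Ω ∧ ptrB Ω = ω ∧ x = cmiP Ω} ≤
      sInf {x : ℝ | ∃ (m : ℕ) (π : Fin m → ℝ) (ωi : Fin m → Matrix (a × b) (a × b) ℂ),
        (∀ i, 0 ≤ π i) ∧ (∑ i, π i = 1) ∧ (∀ i, IsDensity (ωi i) ∧ IsPure (ωi i)) ∧
        ω = ∑ i, ((π i : ℂ)) • ωi i ∧ x = ∑ i, π i * vN (ptrB (ωi i))} := by
  classical
  set S := {x : ℝ | ∃ (k : ℕ) (Ω : Matrix ((a × b) × Fin k) ((a × b) × Fin k) ℂ),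
      IsDensity Ω ∧ ptrB Ω = ω ∧ x = cmiP Ω} with hS
  obtain ⟨m0, π0, ωi0, hπ00, hπ10, hdi0, hdecomp0⟩ := SqEF.ensemble_exists ω hω
  apply le_csInf
  · exact ⟨∑ i, π0 i * vN (ptrB (ωi0 i)), m0, π0, ωi0, hπ00, hπ10, hdi0, hdecomp0, rfl⟩
  rintro t ⟨m, π, ωi, hπ0, hπ1, hdi, hdecomp, rfl⟩
  set B : Fin m → Matrix (a × b) (a × b) ℂ := fun k => (π k : ℂ) • ωi k with hB
  set Ω := Matrix.blockDiagonal B with hΩ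
  have hherm : ∀ k, (ωi k).IsHermitian := fun k => (hdi k).1.1.1
  have htrk : ∀ k, (ωi k).trace = 1 := fun k => (hdi k).1.2
  have hpsdB : ∀ k, (B k).PosSemidef := fun k => SqEF.posSemidef_smul (hdi k).1.1 (hπ0 k)
  have hdens : IsDensity Ω := by
    refine ⟨SqEF.posSemidef_blockDiagonal _ hpsdB, ?_⟩
    rw [hΩ, Matrix.trace_blockDiagonal]
    simp only [hB, Matrix.trace_smul, htrk, smul_eq_mul, mul_one]
    exact_mod_cast hπ1
  have hptr : ptrB Ω = ω := by
    funext x y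
    simp only [ptrB, Matrix.of_apply, hΩ, Matrix.blockDiagonal_apply_eq]
    rw [hdecomp, Matrix.sum_apply]
  have hmem : cmiP Ω ∈ S := ⟨m, Ω, hdens, hptr, rfl⟩
  -- compute the four entropies
  have hM1 : (Matrix.of fun (x y : a × Fin m) => ∑ j, Ω ((x.1, j), x.2) ((y.1, j), y.2))
      = Matrix.blockDiagonal (fun k => (π k : ℂ) • ptrB (ωi k)) := by
    funext x y
    rcases x with ⟨i, k⟩
    rcases y with ⟨i', k'⟩
    simp only [Matrix.of_apply, hΩ, Matrix.blockDiagonal_apply]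
    by_cases hk : k = k'
    · subst hk
      simp only [if_pos rfl, eq_self_iff_true, if_true, hB, Matrix.smul_apply, ptrB,
        Matrix.of_apply, smul_eq_mul, Finset.mul_sum]
    · simp [hk]
  have hM2 : (Matrix.of fun (x y : b × Fin m) => ∑ i, Ω ((i, x.1), x.2) ((i, y.1), y.2))
      = Matrix.blockDiagonal (fun k => (π k : ℂ) • ptrA (ωi k)) := by
    funext x y
    rcases x with ⟨j, k⟩
    rcases y with ⟨j', k'⟩
    simp only [Matrix.of_apply, hΩ, Matrix.blockDiagonal_apply]
    by_cases hk : k = k'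
    · subst hk
      simp only [if_pos rfl, eq_self_iff_true, if_true, hB, Matrix.smul_apply, ptrA,
        Matrix.of_apply, smul_eq_mul, Finset.mul_sum]
    · simp [hk]
  have hM3 : ptrA Ω = Matrix.diagonal (fun k => ((π k : ℝ) : ℂ)) := by
    funext k k'
    simp only [ptrA, Matrix.of_apply, hΩ, Matrix.blockDiagonal_apply]
    by_cases hk : k = k'
    · subst hk
      rw [Matrix.diagonal_apply_eq]
      simp only [eq_self_iff_true, if_true]
      have htr2 : ∑ p : a × b, B k p p = (B k).trace := rfl
      rw [htr2, hB]
      simp [Matrix.trace_smul, htrk k]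
    · simp [hk, Matrix.diagonal_apply_ne _ hk]
  have hvN1 : vN (Matrix.of fun (x y : a × Fin m) => ∑ j, Ω ((x.1, j), x.2) ((y.1, j), y.2))
      = ∑ k, (π k * vN (ptrB (ωi k)) + Real.negMulLog (π k)) := by
    rw [hM1, SqEF.vN_blockDiagonal _
      (fun k => (SqEF.posSemidef_smul (SqEF.posSemidef_ptrB (hdi k).1.1) (hπ0 k)).1)]
    apply Finset.sum_congr rfl
    intro k _
    exact SqEF.vN_smul _ (SqEF.isHermitian_ptrB (hherm k))
      ((SqEF.trace_ptrB (ωi k)).trans (htrk k)) (π k)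
  have hAB : ∀ k, vN (ptrA (ωi k)) = vN (ptrB (ωi k)) := by
    intro k
    obtain ⟨v, hv⟩ := (hdi k).2
    rw [hv]
    exact SqEF.vN_pure_ptr_eq v
  have hptrApsd : ∀ k, (ptrA (ωi k)).PosSemidef := by
    intro k
    refine Matrix.PosSemidef.of_dotProduct_mulVec_nonneg (SqEF.isHermitian_ptrA (hherm k)) (fun x => ?_)
    obtain ⟨v, hv⟩ := (hdi k).2
    rw [hv, SqEF.ptrA_vecMulVec]
    exact (Matrix.posSemidef_self_mul_conjTranspose _).dotProduct_mulVec_nonneg x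
  have hvN2 : vN (Matrix.of fun (x y : b × Fin m) => ∑ i, Ω ((i, x.1), x.2) ((i, y.1), y.2))
      = ∑ k, (π k * vN (ptrB (ωi k)) + Real.negMulLog (π k)) := by
    rw [hM2, SqEF.vN_blockDiagonal _
      (fun k => (SqEF.posSemidef_smul (hptrApsd k) (hπ0 k)).1)]
    apply Finset.sum_congr rfl
    intro k _
    rw [SqEF.vN_smul _ (SqEF.isHermitian_ptrA (hherm k))
      ((SqEF.trace_ptrA (ωi k)).trans (htrk k)) (π k), hAB k]
  have hvN3 : vN (ptrA Ω) = ∑ k, Real.negMulLog (π k) := by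
    rw [hM3, SqEF.vN_diagonal]
  have hvN4 : vN Ω = ∑ k, Real.negMulLog (π k) := by
    rw [hΩ, SqEF.vN_blockDiagonal _ (fun k => (hpsdB k).1)]
    apply Finset.sum_congr rfl
    intro k _
    rw [hB]
    rw [SqEF.vN_smul _ (hherm k) (htrk k) (π k),
      SqEF.vN_pure_zero _ (hdi k).1 (hdi k).2, mul_zero, zero_add]
  have hcmi : cmiP Ω = 2 * ∑ k, π k * vN (ptrB (ωi k)) := by
    rw [cmiP, hvN1, hvN2, hvN3, hvN4, Finset.sum_add_distrib]
    ring
  by_cases hbdd : BddBelow S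
  · have hle := csInf_le hbdd hmem
    rw [hcmi] at hle
    linarith
  · rw [Real.sInf_of_not_bddBelow hbdd]
    have hnn : 0 ≤ ∑ k, π k * vN (ptrB (ωi k)) := by
      apply Finset.sum_nonneg
      intro k _
      exact mul_nonneg (hπ0 k) (SqEF.vN_nonneg _ (SqEF.posSemidef_ptrB (hdi k).1.1)
        ((SqEF.trace_ptrB (ωi k)).trans (htrk k)))
    linarith


end
end

section
/- Let H_A be a positive self-adjoint operator with Tr e^{−βH_A} < ∞ for all β > 0 and lowest eigenvalue 0, and for E > 0 let γ(E) denote the Gibbs state at mean energy E (maximizing the entropy among states with Tr H_A ρ ≤ E). Then δ · H(γ(E/δ)) → 0 as δ → 0⁺. -/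
open scoped BigOperators Kronecker ComplexOrder
open Matrix

noncomputable section

noncomputable section

lemma summable_mul_exp (E : ℕ → ℝ) (hEnn : ∀ n, 0 ≤ E n)
    (hZ : ∀ β > 0, Summable fun n => Real.exp (-β * E n)) (b : ℝ) (hb : 0 < b) :
    Summable fun n => E n * Real.exp (-b * E n) := by
  refine Summable.of_nonneg_of_le (fun n => mul_nonneg (hEnn n) (Real.exp_nonneg _))
    (fun n => ?_) ((hZ (b/2) (by linarith)).mul_left (2 / b))
  · 
    have h1 : E n ≤ (2 / b) * Real.exp ((b/2) * E n) := by
      have h2 : (b/2) * E n ≤ Real.exp ((b/2) * E n) := by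
        linarith [Real.add_one_le_exp ((b/2) * E n)]
      calc E n = (2/b) * ((b/2) * E n) := by field_simp
        _ ≤ (2/b) * Real.exp ((b/2) * E n) :=
            mul_le_mul_of_nonneg_left h2 (by positivity)
    calc E n * Real.exp (-b * E n) ≤ (2 / b) * Real.exp ((b/2) * E n) * Real.exp (-b * E n) :=
          mul_le_mul_of_nonneg_right h1 (Real.exp_nonneg _)
      _ = (2 / b) * Real.exp (-(b/2) * E n) := by
          rw [mul_assoc, ← Real.exp_add]; ring_nf

lemma one_le_Z (E : ℕ → ℝ) (hE0 : E 0 = 0) (b : ℝ)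
    (hsum : Summable fun n => Real.exp (-b * E n)) :
    1 ≤ ∑' n, Real.exp (-b * E n) := by
  have := Summable.le_tsum hsum 0 (fun j _ => Real.exp_nonneg _)
  simpa [hE0] using this

end

noncomputable section

lemma tsum_negMulLog_eq (E : ℕ → ℝ) (hE0 : E 0 = 0) (b : ℝ) (hb : 0 < b)
    (hsum : Summable fun n => Real.exp (-b * E n))
    (hT : Summable fun n => E n * Real.exp (-b * E n)) :
    ∑' n, Real.negMulLog (Real.exp (-b * E n) / ∑' k, Real.exp (-b * E k)) =
      (b * ∑' n, E n * Real.exp (-b * E n)) / (∑' n, Real.exp (-b * E n))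
        + Real.log (∑' n, Real.exp (-b * E n)) := by
  set Z := ∑' n, Real.exp (-b * E n) with hZdef
  have hZpos : 0 < Z := lt_of_lt_of_le one_pos (one_le_Z E hE0 b hsum)
  have hpt : ∀ n, Real.negMulLog (Real.exp (-b * E n) / Z) =
      (b * (E n * Real.exp (-b * E n)) + Real.log Z * Real.exp (-b * E n)) / Z := by
    intro n
    rw [Real.negMulLog, Real.log_div (Real.exp_ne_zero _) (ne_of_gt hZpos), Real.log_exp]
    field_simp
    ring
  rw [tsum_congr hpt]
  rw [tsum_div_const, Summable.tsum_add (hT.mul_left b) (hsum.mul_left (Real.log Z)),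
    tsum_mul_left, tsum_mul_left]
  rw [← hZdef]
  field_simp

lemma Z_le_split (E : ℕ → ℝ) (hEnn : ∀ n, 0 ≤ E n)
    (hZ : ∀ β > 0, Summable fun n => Real.exp (-β * E n))
    (e : ℝ) (he : 0 < e) (b : ℝ) (hb : 0 < b)
    (hβe : (∑' n, E n * Real.exp (-b * E n)) = e * ∑' n, Real.exp (-b * E n))
    (β₀ : ℝ) (hβ₀ : 0 < β₀) :
    (∑' n, Real.exp (-b * E n)) ≤
      2 * Real.exp (2 * β₀ * e) * ∑' n, Real.exp (-β₀ * E n) := by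
  set w : ℕ → ℝ := fun n => Real.exp (-b * E n) with hw
  have hsum : Summable w := hZ b hb
  have hT : Summable fun n => E n * w n := summable_mul_exp E hEnn hZ b hb
  set A : ℕ → ℝ := fun n => if E n < 2*e then w n else 0 with hA
  set B : ℕ → ℝ := fun n => if E n < 2*e then 0 else w n with hB
  have hwnn : ∀ n, 0 ≤ w n := fun n => Real.exp_nonneg _
  have hAnn : ∀ n, 0 ≤ A n := fun n => by
    by_cases h : E n < 2*e <;> simp [hA, h, hwnn n]
  have hBnn : ∀ n, 0 ≤ B n := fun n => by
    by_cases h : E n < 2*e <;> simp [hB, h, hwnn n]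
  have hAle : ∀ n, A n ≤ w n := fun n => by
    by_cases h : E n < 2*e <;> simp [hA, h, hwnn n]
  have hBle : ∀ n, B n ≤ w n := fun n => by
    by_cases h : E n < 2*e <;> simp [hB, h, hwnn n]
  have hAsum : Summable A := Summable.of_nonneg_of_le hAnn hAle hsum
  have hBsum : Summable B := Summable.of_nonneg_of_le hBnn hBle hsum
  have hsplit : ∀ n, w n = A n + B n := by
    intro n; by_cases h : E n < 2*e <;> simp [hA, hB, h]
  have hZeq : (∑' n, w n) = (∑' n, A n) + (∑' n, B n) := by
    rw [← Summable.tsum_add hAsum hBsum]; exact tsum_congr hsplit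
  have hBbound : 2*e*(∑' n, B n) ≤ e * ∑' n, w n := by
    have hptB : ∀ n, 2*e*B n ≤ E n * w n := by
      intro n
      by_cases h : E n < 2*e
      · simp only [hB, h, if_pos]
        simp
        exact mul_nonneg (hEnn n) (Real.exp_nonneg _)
      · simp only [hB, h, if_neg, if_false]
        push_neg at h
        exact mul_le_mul_of_nonneg_right h (Real.exp_nonneg _)
    calc 2*e*(∑' n, B n) = ∑' n, 2*e*B n := (tsum_mul_left).symm
      _ ≤ ∑' n, E n * w n := Summable.tsum_le_tsum hptB (hBsum.mul_left _) hT
      _ = e * ∑' n, w n := hβe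
  have hBhalf : (∑' n, B n) ≤ (∑' n, w n)/2 := by
    have := hBbound
    nlinarith
  have hZleA : (∑' n, w n) ≤ 2 * ∑' n, A n := by
    rw [hZeq]; linarith
  have hAbound : (∑' n, A n) ≤ Real.exp (2*β₀*e) * ∑' n, Real.exp (-β₀ * E n) := by
    have hpt : ∀ n, A n ≤ Real.exp (2*β₀*e) * Real.exp (-β₀ * E n) := by
      intro n
      by_cases h : E n < 2*e
      · simp only [hA, h, if_pos]
        rw [← Real.exp_add]
        have h1 : w n ≤ 1 := by
          rw [hw]
          simp only
          rw [← Real.exp_zero]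
          apply Real.exp_le_exp.2
          have := hEnn n
          nlinarith
        have h2 : (1:ℝ) ≤ Real.exp (2*β₀*e + -β₀ * E n) := by
          rw [← Real.exp_zero]
          apply Real.exp_le_exp.2
          nlinarith
        linarith
      · simp only [hA, h, if_neg, if_false]
        positivity
    calc (∑' n, A n) ≤ ∑' n, Real.exp (2*β₀*e) * Real.exp (-β₀ * E n) :=
          Summable.tsum_le_tsum hpt hAsum ((hZ β₀ hβ₀).mul_left _)
      _ = Real.exp (2*β₀*e) * ∑' n, Real.exp (-β₀ * E n) := tsum_mul_left
  calc (∑' n, w n) ≤ 2 * ∑' n, A n := hZleA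
    _ ≤ 2 * (Real.exp (2*β₀*e) * ∑' n, Real.exp (-β₀ * E n)) := by linarith
    _ = 2 * Real.exp (2*β₀*e) * ∑' n, Real.exp (-β₀ * E n) := by ring

lemma beta_small (E : ℕ → ℝ) (hE0 : E 0 = 0) (hEnn : ∀ n, 0 ≤ E n)
    (hZ : ∀ β > 0, Summable fun n => Real.exp (-β * E n))
    (e : ℝ) (he : 0 < e) (b : ℝ) (hb : 0 < b)
    (hβe : (∑' n, E n * Real.exp (-b * E n)) = e * ∑' n, Real.exp (-b * E n))
    (β₀ : ℝ) (hβ₀ : 0 < β₀)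
    (hbig : (∑' n, E n * Real.exp (-β₀ * E n)) < e) : b < β₀ := by
  by_contra h
  push_neg at h
  have hle : e ≤ ∑' n, E n * Real.exp (-β₀ * E n) := by
    have h1 : e ≤ e * ∑' n, Real.exp (-b * E n) :=
      le_mul_of_one_le_right he.le (one_le_Z E hE0 b (hZ b hb))
    have h2 : (∑' n, E n * Real.exp (-b * E n)) ≤ ∑' n, E n * Real.exp (-β₀ * E n) := by
      apply Summable.tsum_le_tsum _ (summable_mul_exp E hEnn hZ b hb)
        (summable_mul_exp E hEnn hZ β₀ hβ₀)
      intro n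
      apply mul_le_mul_of_nonneg_left _ (hEnn n)
      apply Real.exp_le_exp.2
      nlinarith [hEnn n]
    linarith [hβe ▸ h2]
  linarith

end


set_option maxHeartbeats 1000000 in
theorem stmt16 (E : ℕ → ℝ) (hE0 : E 0 = 0) (hEnn : ∀ n, 0 ≤ E n)
    (hZ : ∀ β > 0, Summable fun n => Real.exp (-β * E n))
    (β : ℝ → ℝ) (hβpos : ∀ e > 0, 0 < β e)
    (hβ : ∀ e > 0, (∑' n, E n * Real.exp (-β e * E n)) = e * ∑' n, Real.exp (-β e * E n))
    (En : ℝ) (hEn : 0 < En) :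
    Filter.Tendsto
      (fun δ : ℝ => δ * ∑' n, Real.negMulLog
        (Real.exp (-β (En / δ) * E n) / ∑' k, Real.exp (-β (En / δ) * E k)))
      (nhdsWithin 0 (Set.Ioi 0)) (nhds 0) := by
  rw [Metric.tendsto_nhdsWithin_nhds]
  intro ε hε
  have hlog2 : (0:ℝ) < Real.log 2 := Real.log_pos (by norm_num)
  set β₀ : ℝ := ε / (8*(En+1)) with hβ₀def
  have hβ₀pos : 0 < β₀ := by positivity
  set C := ∑' n, E n * Real.exp (-β₀ * E n) with hCdef
  have hC0 : 0 ≤ C := tsum_nonneg (fun n => mul_nonneg (hEnn n) (Real.exp_nonneg _))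
  set L := Real.log (∑' n, Real.exp (-β₀ * E n)) with hLdef
  have hL0 : 0 ≤ L := Real.log_nonneg (one_le_Z E hE0 β₀ (hZ β₀ hβ₀pos))
  refine ⟨min (min (En/(C+1)) (ε/(4*(Real.log 2 + 1)))) (ε/(4*(L+1))), ?_, ?_⟩
  · apply lt_min (lt_min _ _)
    · exact div_pos hε (by nlinarith)
    · exact div_pos hEn (by linarith)
    · exact div_pos hε (by nlinarith)
  · intro δ hδmem hδdist
    have hδpos : 0 < δ := hδmem
    rw [Real.dist_eq, sub_zero, abs_of_pos hδpos] at hδdist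
    have hδ1 : δ < En/(C+1) := lt_of_lt_of_le hδdist ((min_le_left _ _).trans (min_le_left _ _))
    have hδ2 : δ < ε/(4*(Real.log 2 + 1)) :=
      lt_of_lt_of_le hδdist ((min_le_left _ _).trans (min_le_right _ _))
    have hδ3 : δ < ε/(4*(L+1)) := lt_of_lt_of_le hδdist (min_le_right _ _)
    set e := En / δ with hedef
    have he : 0 < e := div_pos hEn hδpos
    set b := β e with hbdef
    have hb : 0 < b := hβpos e he
    have hbe := hβ e he
    have hCe : C < e := by
      have h1 : δ * (C+1) < En := (lt_div_iff₀ (by linarith)).1 hδ1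
      have h2 : C + 1 < En / δ := (lt_div_iff₀ hδpos).2 (by nlinarith)
      rw [← hedef] at h2
      linarith
    have hblt : b < β₀ := beta_small E hE0 hEnn hZ e he b hb hbe β₀ hβ₀pos hCe
    have hsum := hZ b hb
    have hT := summable_mul_exp E hEnn hZ b hb
    have hS := tsum_negMulLog_eq E hE0 b hb hsum hT
    set Zb := ∑' n, Real.exp (-b * E n) with hZbdef
    have hZb1 : 1 ≤ Zb := one_le_Z E hE0 b hsum
    have hZbpos : 0 < Zb := by linarith
    have hlogZb0 : 0 ≤ Real.log Zb := Real.log_nonneg hZb1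
    have hfeq : δ * (∑' n, Real.negMulLog (Real.exp (-b * E n) / ∑' k, Real.exp (-b * E k))) =
        b * En + δ * Real.log Zb := by
      rw [hS, hbe, hedef]
      field_simp
    rw [hfeq, Real.dist_eq, sub_zero]
    have hnn : 0 ≤ b * En + δ * Real.log Zb := by positivity
    rw [abs_of_nonneg hnn]
    -- bound each piece
    have hZsplit := Z_le_split E hEnn hZ e he b hb hbe β₀ hβ₀pos
    have hZβ₀1 : 1 ≤ ∑' n, Real.exp (-β₀ * E n) := one_le_Z E hE0 β₀ (hZ β₀ hβ₀pos)
    have hlogZ : Real.log Zb ≤ Real.log 2 + 2*β₀*e + L := by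
      have h1 : Real.log Zb ≤ Real.log (2 * Real.exp (2*β₀*e) * ∑' n, Real.exp (-β₀*E n)) :=
        Real.log_le_log hZbpos hZsplit
      rw [Real.log_mul (by positivity) (by linarith), Real.log_mul (by norm_num)
        (Real.exp_ne_zero _), Real.log_exp] at h1
      rw [hLdef]
      linarith
    have hβ₀mul : β₀ * (8*(En+1)) = ε := by
      rw [hβ₀def]; field_simp
    have hbEn : b * En ≤ ε/8 := by nlinarith
    have hδe : δ * e = En := by
      rw [hedef]; field_simp
    have hδlog2 : δ * Real.log 2 < ε/4 := by
      have h := (lt_div_iff₀ (by linarith : (0:ℝ) < 4*(Real.log 2 + 1))).1 hδ2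
      ring_nf at h ⊢
      linarith
    have hδL : δ * L < ε/4 := by
      have h := (lt_div_iff₀ (by linarith : (0:ℝ) < 4*(L + 1))).1 hδ3
      ring_nf at h ⊢
      linarith
    have h2β₀ : 2*β₀*(δ*e) ≤ ε/4 := by
      rw [hδe]; nlinarith
    have hδlogZb : δ * Real.log Zb ≤ δ * Real.log 2 + 2*β₀*(δ*e) + δ * L := by
      have := mul_le_mul_of_nonneg_left hlogZ hδpos.le
      nlinarith
    linarith


end
end
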